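/- Let Q ∈ ℝ^{n×m}, Θ ∈ ℝ^{k×n}, S ∈ ℝ^{k×m} with ‖ΘQ − S‖ ≤ F. Then σ_min(S) − F ≤ σ_min(ΘQ) ≤ σ_max(ΘQ) ≤ σ_max(S) + F. If additionally Θ is an ε-embedding for Q (ε < 1) and Δ = ‖I − SᵀS‖_F, then (1+ε)^{-1/2}(1 − Δ − F) ≤ σ_min(Q) ≤ σ_max(Q) ≤ (1−ε)^{-1/2}(1 + Δ + F). -/

import Mathlib

open Matrix

/-- Euclidean (ℓ₂) norm of a vector. -/
noncomputable def _root_.enorm {n : ℕ} (v : Fin n → ℝ) : ℝ := Real.sqrt (v ⬝ᵥ v)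

/-- Smallest singular value: infimum of ‖A x‖ over unit vectors x. -/
noncomputable def smin {k m : ℕ} (A : Matrix (Fin k) (Fin m) ℝ) : ℝ :=
  sInf ((fun x => _root_.enorm (A.mulVec x)) '' {x | _root_.enorm x = 1})

/-- Largest singular value (spectral norm): supremum of ‖A x‖ over unit vectors x. -/
noncomputable def smax {k m : ℕ} (A : Matrix (Fin k) (Fin m) ℝ) : ℝ :=
  sSup ((fun x => _root_.enorm (A.mulVec x)) '' {x | _root_.enorm x = 1})

/-- Frobenius norm. -/
noncomputable def frob {k m : ℕ} (A : Matrix (Fin k) (Fin m) ℝ) : ℝ :=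
  Real.sqrt (∑ i, ∑ j, (A i j) ^ 2)

lemma dot_self_nonneg' {n : ℕ} (v : Fin n → ℝ) : 0 ≤ v ⬝ᵥ v :=
  Finset.sum_nonneg fun _ _ => mul_self_nonneg _

lemma enorm_eq' {n : ℕ} (v : Fin n → ℝ) :
    _root_.enorm v = ‖(WithLp.equiv 2 (Fin n → ℝ)).symm v‖ := by
  rw [EuclideanSpace.norm_eq]; simp [_root_.enorm, dotProduct, sq]

lemma enorm_nonneg' {n : ℕ} (v : Fin n → ℝ) : 0 ≤ _root_.enorm v := Real.sqrt_nonneg _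

lemma enorm_sq' {n : ℕ} (v : Fin n → ℝ) : _root_.enorm v ^ 2 = v ⬝ᵥ v :=
  Real.sq_sqrt (dot_self_nonneg' v)

lemma abs_dot_le' {n : ℕ} (v w : Fin n → ℝ) : |v ⬝ᵥ w| ≤ _root_.enorm v * _root_.enorm w := by
  rw [enorm_eq', enorm_eq']
  have := abs_real_inner_le_norm ((WithLp.equiv 2 (Fin n → ℝ)).symm v)
    ((WithLp.equiv 2 (Fin n → ℝ)).symm w)
  simpa [real_inner_comm, EuclideanSpace.inner_eq_star_dotProduct, dotProduct, mul_comm] using this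

lemma abs_enorm_sub_enorm' {n : ℕ} (v w : Fin n → ℝ) :
    |_root_.enorm v - _root_.enorm w| ≤ _root_.enorm (v - w) := by
  rw [enorm_eq', enorm_eq', enorm_eq']
  exact abs_norm_sub_norm_le _ _

lemma frob_nonneg' {k m : ℕ} (A : Matrix (Fin k) (Fin m) ℝ) : 0 ≤ frob A := Real.sqrt_nonneg _

lemma enorm_mulVec_le' {k m : ℕ} (A : Matrix (Fin k) (Fin m) ℝ) (x : Fin m → ℝ) :
    _root_.enorm (A.mulVec x) ≤ frob A * _root_.enorm x := by
  rw [_root_.enorm, frob, _root_.enorm, ← Real.sqrt_mul (by positivity)]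
  apply Real.sqrt_le_sqrt
  have h1 : (A.mulVec x) ⬝ᵥ (A.mulVec x) = ∑ i, (∑ j, A i j * x j) ^ 2 := by
    simp [dotProduct, mulVec, sq]
  have h2 : x ⬝ᵥ x = ∑ j, x j ^ 2 := by simp [dotProduct, sq]
  rw [h1, h2, Finset.sum_mul]
  exact Finset.sum_le_sum fun i _ => by
    simpa using Finset.sum_mul_sq_le_sq_mul_sq Finset.univ (fun j => A i j) x

lemma sphere_nonempty' {m : ℕ} (hm : 0 < m) : ∃ x : Fin m → ℝ, _root_.enorm x = 1 := by
  refine ⟨fun j => if j = ⟨0, hm⟩ then 1 else 0, ?_⟩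
  have : (fun j => if j = (⟨0, hm⟩ : Fin m) then (1:ℝ) else 0) ⬝ᵥ
      (fun j => if j = (⟨0, hm⟩ : Fin m) then (1:ℝ) else 0) = 1 := by
    simp [dotProduct, ite_and]
  rw [_root_.enorm, this, Real.sqrt_one]

lemma img_nonempty' {k m : ℕ} (hm : 0 < m) (A : Matrix (Fin k) (Fin m) ℝ) :
    ((fun x => _root_.enorm (A.mulVec x)) '' {x | _root_.enorm x = 1}).Nonempty := by
  obtain ⟨x, hx⟩ := sphere_nonempty' hm
  exact ⟨_, ⟨x, hx, rfl⟩⟩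

lemma img_bddAbove' {k m : ℕ} (A : Matrix (Fin k) (Fin m) ℝ) :
    BddAbove ((fun x => _root_.enorm (A.mulVec x)) '' {x | _root_.enorm x = 1}) := by
  refine ⟨frob A, ?_⟩
  rintro _ ⟨x, hx, rfl⟩
  have := enorm_mulVec_le' A x
  rwa [hx, mul_one] at this

lemma img_bddBelow' {k m : ℕ} (A : Matrix (Fin k) (Fin m) ℝ) :
    BddBelow ((fun x => _root_.enorm (A.mulVec x)) '' {x | _root_.enorm x = 1}) := by
  refine ⟨0, ?_⟩
  rintro _ ⟨x, hx, rfl⟩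
  exact enorm_nonneg' _

lemma le_smax' {k m : ℕ} (A : Matrix (Fin k) (Fin m) ℝ) {x : Fin m → ℝ} (hx : _root_.enorm x = 1) :
    _root_.enorm (A.mulVec x) ≤ smax A :=
  le_csSup (img_bddAbove' A) ⟨x, hx, rfl⟩

lemma smax_le' {k m : ℕ} (hm : 0 < m) (A : Matrix (Fin k) (Fin m) ℝ) {c : ℝ}
    (h : ∀ x : Fin m → ℝ, _root_.enorm x = 1 → _root_.enorm (A.mulVec x) ≤ c) : smax A ≤ c :=
  csSup_le (img_nonempty' hm A) (by rintro _ ⟨x, hx, rfl⟩; exact h x hx)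

lemma smin_le' {k m : ℕ} (A : Matrix (Fin k) (Fin m) ℝ) {x : Fin m → ℝ} (hx : _root_.enorm x = 1) :
    smin A ≤ _root_.enorm (A.mulVec x) :=
  csInf_le (img_bddBelow' A) ⟨x, hx, rfl⟩

lemma le_smin' {k m : ℕ} (hm : 0 < m) (A : Matrix (Fin k) (Fin m) ℝ) {c : ℝ}
    (h : ∀ x : Fin m → ℝ, _root_.enorm x = 1 → c ≤ _root_.enorm (A.mulVec x)) : c ≤ smin A :=
  le_csInf (img_nonempty' hm A) (by rintro _ ⟨x, hx, rfl⟩; exact h x hx)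

lemma dot_STS' {m k : ℕ} (S : Matrix (Fin k) (Fin m) ℝ) (x : Fin m → ℝ) :
    (S.mulVec x) ⬝ᵥ (S.mulVec x) = x ⬝ᵥ ((Sᵀ * S).mulVec x) := by
  rw [← Matrix.mulVec_mulVec, Matrix.mulVec_transpose, dotProduct_comm x,
    ← Matrix.dotProduct_mulVec]

lemma le_of_sq_le' {a t : ℝ} (ht : 0 ≤ t) (h : a ^ 2 ≤ t ^ 2) (ha : 0 ≤ a) : a ≤ t := by
  nlinarith

lemma hS_bound {m k : ℕ} (S : Matrix (Fin k) (Fin m) ℝ) (Δ : ℝ)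
    (hΔ : Δ = frob (1 - Sᵀ * S)) (x : Fin m → ℝ) (hx : _root_.enorm x = 1) :
    1 - Δ ≤ _root_.enorm (S.mulVec x) ∧ _root_.enorm (S.mulVec x) ≤ 1 + Δ := by
  have hΔ0 : 0 ≤ Δ := hΔ ▸ frob_nonneg' _
  have ht0 : 0 ≤ _root_.enorm (S.mulVec x) := enorm_nonneg' _
  have hx1 : x ⬝ᵥ x = 1 := by
    have h := enorm_sq' x; rw [hx] at h; simpa using h.symm
  have key : |_root_.enorm (S.mulVec x) ^ 2 - 1| ≤ Δ := by
    have e1 : _root_.enorm (S.mulVec x) ^ 2 = x ⬝ᵥ ((Sᵀ * S).mulVec x) := by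
      rw [enorm_sq', dot_STS']
    have h3 : |x ⬝ᵥ ((1 - Sᵀ * S).mulVec x)| ≤ Δ := by
      have c1 : |x ⬝ᵥ ((1 - Sᵀ * S).mulVec x)| ≤ _root_.enorm x * _root_.enorm ((1 - Sᵀ * S).mulVec x) :=
        abs_dot_le' _ _
      have c2 : _root_.enorm ((1 - Sᵀ * S).mulVec x) ≤ frob (1 - Sᵀ * S) * _root_.enorm x :=
        enorm_mulVec_le' _ _
      rw [hx, mul_one] at c2
      rw [hx, one_mul] at c1
      rw [hΔ]
      exact c1.trans c2
    rw [Matrix.sub_mulVec, dotProduct_sub, Matrix.one_mulVec, hx1] at h3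
    rw [e1, abs_sub_comm]
    exact h3
  have hk := abs_le.mp key
  constructor
  · rcases le_or_gt (1 - Δ) 0 with h | h
    · exact h.trans ht0
    · exact le_of_sq_le' ht0 (by nlinarith) h.le
  · exact le_of_sq_le' (by linarith) (by nlinarith) ht0

set_option maxHeartbeats 1000000 in
/-- Perturbation and ε-embedding bounds on the singular values of Q via its sketch S. -/
theorem singular_values_via_sketch_perturbation {n m k : ℕ} (hm : 0 < m)
    (Q : Matrix (Fin n) (Fin m) ℝ) (Θ : Matrix (Fin k) (Fin n) ℝ)
    (S : Matrix (Fin k) (Fin m) ℝ) (F ε Δ : ℝ)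
    (hF : smax (Θ * Q - S) ≤ F) (hε : ε < 1)
    (hemb : ∀ a b : Fin m → ℝ,
      |(Q.mulVec a) ⬝ᵥ (Q.mulVec b) - (Θ.mulVec (Q.mulVec a)) ⬝ᵥ (Θ.mulVec (Q.mulVec b))|
        ≤ ε * _root_.enorm (Q.mulVec a) * _root_.enorm (Q.mulVec b))
    (hΔ : Δ = frob (1 - Sᵀ * S)) :
    (smin S - F ≤ smin (Θ * Q) ∧ smax (Θ * Q) ≤ smax S + F) ∧
      ((Real.sqrt (1 + ε))⁻¹ * (1 - Δ - F) ≤ smin Q ∧ smin Q ≤ smax Q ∧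
        smax Q ≤ (Real.sqrt (1 - ε))⁻¹ * (1 + Δ + F)) := by
  have hΔ0 : 0 ≤ Δ := hΔ ▸ frob_nonneg' _
  have hpert : ∀ x : Fin m → ℝ, _root_.enorm x = 1 →
      |_root_.enorm ((Θ * Q).mulVec x) - _root_.enorm (S.mulVec x)| ≤ F := by
    intro x hx
    have h1 := abs_enorm_sub_enorm' ((Θ * Q).mulVec x) (S.mulVec x)
    rw [← Matrix.sub_mulVec] at h1
    exact h1.trans ((le_smax' _ hx).trans hF)
  have hS : ∀ x : Fin m → ℝ, _root_.enorm x = 1 →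
      1 - Δ ≤ _root_.enorm (S.mulVec x) ∧ _root_.enorm (S.mulVec x) ≤ 1 + Δ :=
    fun x hx => hS_bound S Δ hΔ x hx
  have part1a : smin S - F ≤ smin (Θ * Q) := by
    apply le_smin' hm
    intro x hx
    have h1 := (abs_le.mp (hpert x hx)).1
    have h2 := smin_le' S hx
    linarith
  have part1b : smax (Θ * Q) ≤ smax S + F := by
    apply smax_le' hm
    intro x hx
    have h1 := (abs_le.mp (hpert x hx)).2
    have h2 := le_smax' S hx
    linarith
  have hembx : ∀ x : Fin m → ℝ,
      |Q.mulVec x ⬝ᵥ Q.mulVec x - (Θ * Q).mulVec x ⬝ᵥ (Θ * Q).mulVec x|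
        ≤ ε * (Q.mulVec x ⬝ᵥ Q.mulVec x) := by
    intro x
    have e := hemb x x
    rw [Matrix.mulVec_mulVec] at e
    have h : ε * _root_.enorm (Q.mulVec x) * _root_.enorm (Q.mulVec x)
        = ε * (Q.mulVec x ⬝ᵥ Q.mulVec x) := by rw [← enorm_sq']; ring
    rwa [h] at e
  have h1ε : (0:ℝ) < 1 - ε := by linarith
  have part2c : smax Q ≤ (Real.sqrt (1 - ε))⁻¹ * (1 + Δ + F) := by
    apply smax_le' hm
    intro x hx
    have he := abs_le.mp (hembx x)
    have hw : Real.sqrt (1 - ε) * _root_.enorm (Q.mulVec x) ≤ _root_.enorm ((Θ * Q).mulVec x) := by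
      apply le_of_sq_le' (enorm_nonneg' _) _ (mul_nonneg (Real.sqrt_nonneg _) (enorm_nonneg' _))
      rw [mul_pow, Real.sq_sqrt h1ε.le, enorm_sq', enorm_sq']
      nlinarith [he.1]
    have hub : _root_.enorm ((Θ * Q).mulVec x) ≤ 1 + Δ + F := by
      have h1 := (abs_le.mp (hpert x hx)).2
      have h2 := (hS x hx).2
      linarith
    rw [inv_mul_eq_div, le_div_iff₀ (Real.sqrt_pos.mpr h1ε), mul_comm]
    linarith
  have part2a : (Real.sqrt (1 + ε))⁻¹ * (1 - Δ - F) ≤ smin Q := by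
    rcases le_or_gt (1 + ε) 0 with hcase | hcase
    · rw [Real.sqrt_eq_zero'.mpr (by linarith), _root_.inv_zero, zero_mul]
      exact le_smin' hm Q fun x _ => enorm_nonneg' _
    · apply le_smin' hm
      intro x hx
      have he := abs_le.mp (hembx x)
      have hw : _root_.enorm ((Θ * Q).mulVec x) ≤ Real.sqrt (1 + ε) * _root_.enorm (Q.mulVec x) := by
        apply le_of_sq_le' (mul_nonneg (Real.sqrt_nonneg _) (enorm_nonneg' _)) _ (enorm_nonneg' _)
        rw [mul_pow, Real.sq_sqrt hcase.le, enorm_sq', enorm_sq']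
        nlinarith [he.2]
      have hlb : 1 - Δ - F ≤ _root_.enorm ((Θ * Q).mulVec x) := by
        have h1 := (abs_le.mp (hpert x hx)).1
        have h2 := (hS x hx).1
        linarith
      rw [inv_mul_eq_div, div_le_iff₀ (Real.sqrt_pos.mpr hcase), mul_comm]
      linarith
  have part2b : smin Q ≤ smax Q := by
    obtain ⟨x0, hx0⟩ := sphere_nonempty' hm
    exact (smin_le' Q hx0).trans (le_smax' Q hx0)
  exact ⟨⟨part1a, part1b⟩, part2a, part2b, part2c⟩
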